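/- arXiv:math/0601226 — 2 statements merged into one kernel-verified Lean document; each statement's English description precedes it below -/
import Mathlib

section
/- Let Δ be a nonempty closed convex subset of ℝⁿ, equipped with either the ℓ¹ metric d₁(x,y) = Σ_{i=1}^n |x_i − y_i| or the Euclidean metric d₂(x,y) = (Σ_{i=1}^n (x_i − y_i)²)^{1/2}. For any metric space X and any λ-Lipschitz map f : A → Δ defined on a nonempty subset A ⊆ X, there exists an (n²·λ)-Lipschitz map f̃ : X → Δ extending f. -/
open RealInnerProductSpace

private lemma d2_coord {n : ℕ} (u v : EuclideanSpace ℝ (Fin n)) (i : Fin n) :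
    |u i - v i| ≤ dist u v := by
  rw [EuclideanSpace.dist_eq, ← Real.sqrt_sq_eq_abs]
  apply Real.sqrt_le_sqrt
  have h : (u i - v i) ^ 2 = dist (u i) (v i) ^ 2 := by rw [Real.dist_eq, sq_abs]
  rw [h]
  exact Finset.single_le_sum (f := fun j => dist (u j) (v j) ^ 2)
    (fun j _ => sq_nonneg _) (Finset.mem_univ i)

private lemma d2_le_sum {n : ℕ} (u v : EuclideanSpace ℝ (Fin n)) :
    dist u v ≤ ∑ i, |u i - v i| := by
  rw [EuclideanSpace.dist_eq]
  have h : ∑ i, dist (u i) (v i) ^ 2 ≤ (∑ i, |u i - v i|) ^ 2 := by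
    simp only [Real.dist_eq]
    exact Finset.sum_sq_le_sq_sum_of_nonneg (fun i _ => abs_nonneg _)
  calc Real.sqrt (∑ i, dist (u i) (v i) ^ 2) ≤ Real.sqrt ((∑ i, |u i - v i|) ^ 2) :=
        Real.sqrt_le_sqrt h
    _ = ∑ i, |u i - v i| := Real.sqrt_sq (Finset.sum_nonneg fun i _ => abs_nonneg _)

private lemma d1_eq {n : ℕ} (u v : PiLp 1 fun _ : Fin n => ℝ) :
    dist u v = ∑ i, |u i - v i| := by
  have h0 : (0:ℝ) < (1:ENNReal).toReal := by norm_num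
  rw [PiLp.dist_eq_sum h0]
  simp [Real.dist_eq]

private lemma exists_proj {F : Type*} [NormedAddCommGroup F] [InnerProductSpace ℝ F]
    [CompleteSpace F] (Δ : Set F) (hne : Δ.Nonempty) (hcl : IsClosed Δ) (hconv : Convex ℝ Δ) :
    ∃ P : F → F, (∀ u, P u ∈ Δ) ∧ (∀ u ∈ Δ, P u = u) ∧ ∀ u v, dist (P u) (P v) ≤ dist u v := by
  have hcomp : IsComplete Δ := hcl.isComplete
  choose P hPmem hPmin using exists_norm_eq_iInf_of_complete_convex hne hcomp hconv
  have key : ∀ u, ∀ w ∈ Δ, ⟪u - P u, w - P u⟫ ≤ 0 := fun u =>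
    (norm_eq_iInf_iff_real_inner_le_zero hconv (hPmem u)).1 (hPmin u)
  refine ⟨P, hPmem, ?_, ?_⟩
  · intro u hu
    have h1 := key u u hu
    rw [real_inner_self_eq_norm_sq] at h1
    have h2 : ‖u - P u‖ = 0 := by nlinarith [norm_nonneg (u - P u)]
    rw [norm_eq_zero, sub_eq_zero] at h2
    exact h2.symm
  · intro u v
    have h1 := key u (P v) (hPmem v)
    have h2 := key v (P u) (hPmem u)
    have e : ⟪u - v, P u - P v⟫
        = ⟪u - P u, P v - P u⟫ * (-1) + ‖P u - P v‖ ^ 2 + ⟪v - P v, P u - P v⟫ * (-1) := by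
      rw [norm_sub_sq_real]
      simp only [inner_sub_left, inner_sub_right, real_inner_self_eq_norm_sq]
      rw [real_inner_comm (P v) (P u)]
      ring
    have hb : ‖P u - P v‖ ^ 2 ≤ ⟪u - v, P u - P v⟫ := by rw [e]; nlinarith
    have hc : ⟪u - v, P u - P v⟫ ≤ ‖u - v‖ * ‖P u - P v‖ := real_inner_le_norm _ _
    rw [dist_eq_norm, dist_eq_norm]
    rcases eq_or_lt_of_le (norm_nonneg (P u - P v)) with h0 | h0
    · rw [← h0]; exact norm_nonneg _
    · nlinarith

private lemma core (n : ℕ) (Δ : Set (EuclideanSpace ℝ (Fin n))) (hne : Δ.Nonempty)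
    (hcl : IsClosed Δ) (hconv : Convex ℝ Δ) (X : Type*) [MetricSpace X] (A : Set X)
    (lam : ℝ) (hlam : 0 ≤ lam) (f : A → EuclideanSpace ℝ (Fin n)) (hfΔ : ∀ a, f a ∈ Δ)
    (hf : ∀ (a b : A) (i : Fin n), |f a i - f b i| ≤ lam * dist (a : X) (b : X)) :
    ∃ g : X → EuclideanSpace ℝ (Fin n), (∀ x, g x ∈ Δ) ∧ (∀ a : A, g a = f a) ∧
      ∀ x y : X, dist (g x) (g y) ≤ n * lam * dist x y := by
  classical
  obtain ⟨P, hPmem, hPid, hPlip⟩ := exists_proj Δ hne hcl hconv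
  set F : X → Fin n → ℝ := fun x => if h : x ∈ A then (fun i => f ⟨x, h⟩ i) else 0 with hF
  have hlip : LipschitzOnWith lam.toNNReal F A := by
    apply LipschitzOnWith.of_dist_le_mul
    intro x hx y hy
    rw [Real.coe_toNNReal _ hlam]
    apply (dist_pi_le_iff (mul_nonneg hlam dist_nonneg)).2
    intro i
    simp only [hF, dif_pos hx, dif_pos hy, Real.dist_eq]
    exact hf ⟨x, hx⟩ ⟨y, hy⟩ i
  obtain ⟨G, hGlip, hGeq⟩ := hlip.extend_pi
  set u : X → EuclideanSpace ℝ (Fin n) := fun x => (WithLp.equiv 2 (Fin n → ℝ)).symm (G x) with hu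
  refine ⟨fun x => P (u x), fun x => hPmem _, ?_, ?_⟩
  · intro a
    have hFa : F (a : X) = fun i => f a i := by simp [hF, a.2]
    have hua : u (a : X) = f a := by
      apply PiLp.ext
      intro i
      have := (hGeq a.2).symm
      simp only [hu, WithLp.equiv_symm_apply, PiLp.toLp_apply]
      rw [this, hFa]
    show P (u (a : X)) = f a
    rw [hua]
    exact hPid _ (hfΔ a)
  · intro x y
    have step1 : dist (P (u x)) (P (u y)) ≤ dist (u x) (u y) := hPlip _ _
    have step2 : dist (u x) (u y) ≤ ∑ i, |u x i - u y i| := d2_le_sum _ _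
    have step3 : ∀ i, |u x i - u y i| ≤ lam * dist x y := by
      intro i
      have h1 : dist (G x i) (G y i) ≤ dist (G x) (G y) := dist_le_pi_dist (G x) (G y) i
      have h2 : dist (G x) (G y) ≤ lam * dist x y := by
        have := hGlip.dist_le_mul x y
        rwa [Real.coe_toNNReal _ hlam] at this
      have : |u x i - u y i| = dist (G x i) (G y i) := by
        simp [hu, WithLp.equiv_symm_apply, PiLp.toLp_apply, Real.dist_eq]
      rw [this]
      exact h1.trans h2
    calc dist (P (u x)) (P (u y)) ≤ ∑ i, |u x i - u y i| := step1.trans step2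
      _ ≤ ∑ _i : Fin n, lam * dist x y := Finset.sum_le_sum fun i _ => step3 i
      _ = n * lam * dist x y := by
        rw [Finset.sum_const, Finset.card_univ, Fintype.card_fin, nsmul_eq_mul]; ring

/-- Any `λ`-Lipschitz map of a nonempty subset of a metric space `X` into a nonempty closed
convex subset `Δ` of `ℝⁿ`, equipped with either the `ℓ¹`-metric or the Euclidean (`ℓ²`) metric,
extends to an `(n²·λ)`-Lipschitz map of `X` into `Δ`. -/
theorem convex_subset_lipschitz_extension (n : ℕ) :
    (∀ Δ : Set (PiLp 1 fun _ : Fin n => ℝ), Δ.Nonempty → IsClosed Δ → Convex ℝ Δ →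
      ∀ (X : Type*) [MetricSpace X], ∀ A : Set X, A.Nonempty → ∀ lam : ℝ, 0 ≤ lam →
        ∀ f : A → Δ, (∀ a b : A, dist (f a) (f b) ≤ lam * dist (a : X) (b : X)) →
          ∃ g : X → Δ, (∀ a : A, g a = f a) ∧
            ∀ x y : X, dist (g x) (g y) ≤ (n : ℝ) ^ 2 * lam * dist x y) ∧
    (∀ Δ : Set (EuclideanSpace ℝ (Fin n)), Δ.Nonempty → IsClosed Δ → Convex ℝ Δ →
      ∀ (X : Type*) [MetricSpace X], ∀ A : Set X, A.Nonempty → ∀ lam : ℝ, 0 ≤ lam →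
        ∀ f : A → Δ, (∀ a b : A, dist (f a) (f b) ≤ lam * dist (a : X) (b : X)) →
          ∃ g : X → Δ, (∀ a : A, g a = f a) ∧
            ∀ x y : X, dist (g x) (g y) ≤ (n : ℝ) ^ 2 * lam * dist x y) := by
  have hn2 : (n : ℝ) ≤ (n : ℝ) ^ 2 := by
    have : (n : ℝ) * 1 ≤ (n : ℝ) * n := by
      rcases Nat.eq_zero_or_pos n with h | h
      · simp [h]
      · have : (1:ℝ) ≤ n := by exact_mod_cast h
        nlinarith
    nlinarith
  constructor
  · -- ℓ¹ case
    intro Δ hne hcl hconv X _ A hA lam hlam f hf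
    set L : (PiLp 1 fun _ : Fin n => ℝ) ≃L[ℝ] EuclideanSpace ℝ (Fin n) :=
      (PiLp.continuousLinearEquiv 1 ℝ _).trans (PiLp.continuousLinearEquiv 2 ℝ _).symm with hL
    have hLcoord : ∀ (w : PiLp 1 fun _ : Fin n => ℝ) (i : Fin n), L w i = w i := by
      intro w i; rfl
    have hLsym : ∀ (w : EuclideanSpace ℝ (Fin n)) (i : Fin n), L.symm w i = w i := by
      intro w i; rfl
    set Δ' : Set (EuclideanSpace ℝ (Fin n)) := L '' Δ with hΔ'
    have hne' : Δ'.Nonempty := hne.image _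
    have hcl' : IsClosed Δ' := L.toHomeomorph.isClosedMap _ hcl
    have hconv' : Convex ℝ Δ' := hconv.linear_image L.toLinearMap
    have hcoordf : ∀ (a b : A) (i : Fin n),
        |L ((f a : PiLp 1 fun _ : Fin n => ℝ)) i - L ((f b : PiLp 1 fun _ : Fin n => ℝ)) i|
          ≤ lam * dist (a : X) (b : X) := by
      intro a b i
      rw [hLcoord, hLcoord]
      have h1 : |(f a : PiLp 1 fun _ : Fin n => ℝ) i - (f b : PiLp 1 fun _ : Fin n => ℝ) i|
          ≤ dist ((f a : PiLp 1 fun _ : Fin n => ℝ)) ((f b : PiLp 1 fun _ : Fin n => ℝ)) := by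
        rw [d1_eq]
        exact Finset.single_le_sum (f := fun j =>
          |(f a : PiLp 1 fun _ : Fin n => ℝ) j - (f b : PiLp 1 fun _ : Fin n => ℝ) j|)
          (fun j _ => abs_nonneg _) (Finset.mem_univ i)
      have h2 := hf a b
      rw [Subtype.dist_eq] at h2
      exact h1.trans h2
    obtain ⟨g, hgΔ, hgeq, hglip⟩ := core n Δ' hne' hcl' hconv' X A lam hlam
      (fun a => L (f a)) (fun a => ⟨f a, (f a).2, rfl⟩) hcoordf
    have hgmem : ∀ x, L.symm (g x) ∈ Δ := by
      intro x
      obtain ⟨w, hw, hwe⟩ := hgΔ x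
      rw [← hwe, ContinuousLinearEquiv.symm_apply_apply]
      exact hw
    refine ⟨fun x => ⟨L.symm (g x), hgmem x⟩, ?_, ?_⟩
    · intro a
      apply Subtype.ext
      show L.symm (g a) = (f a : PiLp 1 fun _ : Fin n => ℝ)
      rw [hgeq a, ContinuousLinearEquiv.symm_apply_apply]
    · intro x y
      rw [Subtype.dist_eq]
      show dist (L.symm (g x)) (L.symm (g y)) ≤ _
      have s1 : dist (L.symm (g x)) (L.symm (g y)) = ∑ i, |g x i - g y i| := by
        rw [d1_eq]
        exact Finset.sum_congr rfl fun i _ => by rw [hLsym, hLsym]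
      have s2 : ∀ i : Fin n, |g x i - g y i| ≤ dist (g x) (g y) := fun i => d2_coord _ _ i
      calc dist (L.symm (g x)) (L.symm (g y)) = ∑ i, |g x i - g y i| := s1
        _ ≤ ∑ _i : Fin n, dist (g x) (g y) := Finset.sum_le_sum fun i _ => s2 i
        _ = n * dist (g x) (g y) := by
            simp [Finset.sum_const, Finset.card_univ]
        _ ≤ n * (n * lam * dist x y) := by
            apply mul_le_mul_of_nonneg_left (hglip x y) (by positivity)
        _ = (n : ℝ) ^ 2 * lam * dist x y := by ring
  · -- ℓ² case
    intro Δ hne hcl hconv X _ A hA lam hlam f hf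
    have hcoordf : ∀ (a b : A) (i : Fin n),
        |(f a : EuclideanSpace ℝ (Fin n)) i - (f b : EuclideanSpace ℝ (Fin n)) i|
          ≤ lam * dist (a : X) (b : X) := by
      intro a b i
      have h1 := d2_coord ((f a : EuclideanSpace ℝ (Fin n))) ((f b : EuclideanSpace ℝ (Fin n))) i
      have h2 := hf a b
      rw [Subtype.dist_eq] at h2
      exact h1.trans h2
    obtain ⟨g, hgΔ, hgeq, hglip⟩ := core n Δ hne hcl hconv X A lam hlam
      (fun a => (f a : EuclideanSpace ℝ (Fin n))) (fun a => (f a).2) hcoordf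
    refine ⟨fun x => ⟨g x, hgΔ x⟩, ?_, ?_⟩
    · intro a
      apply Subtype.ext
      exact hgeq a
    · intro x y
      rw [Subtype.dist_eq]
      calc dist (g x) (g y) ≤ n * lam * dist x y := hglip x y
        _ ≤ (n : ℝ) ^ 2 * lam * dist x y := by
            apply mul_le_mul_of_nonneg_right _ dist_nonneg
            exact mul_le_mul_of_nonneg_right hn2 hlam
end

section
/- Let X be a metric space and n ≥ 0 an integer. If S^n is a large scale Lipschitz extensor of X, then S^{n+1} is also a large scale Lipschitz extensor of X. -/
open Metric NNReal

section helpers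

private lemma le_of_sq_le_sq'' {a b : ℝ} (ha : 0 ≤ a) (hb : 0 ≤ b) (h : a^2 ≤ b^2) : a ≤ b := by
  nlinarith

private lemma normalize_sub_normalize {E : Type*} [NormedAddCommGroup E] [NormedSpace ℝ E]
    (p q : E) (hp : p ≠ 0) (hq : q ≠ 0) :
    ‖‖p‖⁻¹ • p - ‖q‖⁻¹ • q‖ ≤ 2 / ‖p‖ * ‖p - q‖ := by
  have hp0 : (0:ℝ) < ‖p‖ := norm_pos_iff.2 hp
  have hq0 : (0:ℝ) < ‖q‖ := norm_pos_iff.2 hq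
  have hsplit : ‖p‖⁻¹ • p - ‖q‖⁻¹ • q = ‖p‖⁻¹ • (p - q) + (‖p‖⁻¹ - ‖q‖⁻¹) • q := by
    rw [smul_sub, sub_smul]; abel
  rw [hsplit]
  have h1 : ‖‖p‖⁻¹ • (p - q)‖ = ‖p‖⁻¹ * ‖p - q‖ := by
    rw [norm_smul, Real.norm_eq_abs, abs_of_pos (by positivity)]
  have h2 : ‖(‖p‖⁻¹ - ‖q‖⁻¹) • q‖ ≤ ‖p‖⁻¹ * ‖p - q‖ := by
    rw [norm_smul, Real.norm_eq_abs]
    have e : ‖p‖⁻¹ - ‖q‖⁻¹ = (‖q‖ - ‖p‖) * (‖p‖⁻¹ * ‖q‖⁻¹) := by field_simp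
    rw [e, abs_mul, abs_of_pos (by positivity : (0:ℝ) < ‖p‖⁻¹ * ‖q‖⁻¹)]
    have h3 : |‖q‖ - ‖p‖| ≤ ‖p - q‖ := by
      calc |‖q‖ - ‖p‖| ≤ ‖q - p‖ := abs_norm_sub_norm_le q p
      _ = ‖p - q‖ := norm_sub_rev q p
    calc |‖q‖ - ‖p‖| * (‖p‖⁻¹ * ‖q‖⁻¹) * ‖q‖ = |‖q‖ - ‖p‖| * ‖p‖⁻¹ := by field_simp
    _ ≤ ‖p - q‖ * ‖p‖⁻¹ := by gcongr
    _ = ‖p‖⁻¹ * ‖p - q‖ := mul_comm _ _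
  calc ‖‖p‖⁻¹ • (p - q) + (‖p‖⁻¹ - ‖q‖⁻¹) • q‖ ≤ ‖‖p‖⁻¹ • (p - q)‖ + ‖(‖p‖⁻¹ - ‖q‖⁻¹) • q‖ :=
        norm_add_le _ _
  _ ≤ ‖p‖⁻¹ * ‖p - q‖ + ‖p‖⁻¹ * ‖p - q‖ := by rw [h1]; gcongr
  _ = 2 / ‖p‖ * ‖p - q‖ := by field_simp; ring

private lemma max_lip (c a b : ℝ) : |max c a - max c b| ≤ |a - b| := by
  have h1 : max c a ≤ max c b + |a - b| := by
    apply max_le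
    · linarith [le_max_left c b, abs_nonneg (a - b)]
    · linarith [le_max_right c b, le_abs_self (a - b)]
  have h2 : max c b ≤ max c a + |a - b| := by
    apply max_le
    · linarith [le_max_left c a, abs_nonneg (a - b)]
    · linarith [le_max_right c a, neg_abs_le (a - b)]
  rw [abs_sub_le_iff]
  constructor <;> linarith

private lemma min_lip (c a b : ℝ) : |min c a - min c b| ≤ |a - b| := by
  have h1 : min c a ≤ min c b + |a - b| := by
    have : min c a - |a - b| ≤ min c b := by
      apply le_min
      · linarith [min_le_left c a, abs_nonneg (a - b)]
      · linarith [min_le_right c a, le_abs_self (a - b)]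
    linarith
  have h2 : min c b ≤ min c a + |a - b| := by
    have : min c b - |a - b| ≤ min c a := by
      apply le_min
      · linarith [min_le_left c b, abs_nonneg (a - b)]
      · linarith [min_le_right c b, neg_abs_le (a - b)]
    linarith
  rw [abs_sub_le_iff]
  constructor <;> linarith

private lemma clamp_lip (p q : ℝ) : |max (-1) (min 1 p) - max (-1) (min 1 q)| ≤ |p - q| :=
  le_trans (max_lip (-1) _ _) (min_lip 1 p q)

private lemma clamp_eq_self {s : ℝ} (h : |s| ≤ 1) : max (-1) (min 1 s) = s := by
  rw [abs_le] at h
  rw [min_eq_right h.2, max_eq_right h.1]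

-- Euclidean space helpers
private lemma euc_norm_sq {m : ℕ} (x : EuclideanSpace ℝ (Fin m)) : ‖x‖^2 = ∑ i, x i ^ 2 := by
  rw [EuclideanSpace.norm_eq, Real.sq_sqrt (by positivity)]
  simp [sq_abs]

private lemma euc_coord_le {m : ℕ} (x : EuclideanSpace ℝ (Fin m)) (i : Fin m) : |x i| ≤ ‖x‖ := by
  apply le_of_sq_le_sq'' (abs_nonneg _) (norm_nonneg _)
  rw [euc_norm_sq, sq_abs]
  exact Finset.single_le_sum (fun j _ => sq_nonneg (x j)) (Finset.mem_univ i)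

variable {m : ℕ}

private def projE (x : EuclideanSpace ℝ (Fin (m+1))) : EuclideanSpace ℝ (Fin m) :=
  WithLp.toLp 2 (fun i : Fin m => x i.castSucc)

private def snocE (w : EuclideanSpace ℝ (Fin m)) (s : ℝ) : EuclideanSpace ℝ (Fin (m+1)) :=
  WithLp.toLp 2 (fun i => Fin.lastCases s (fun j => w j) i)

private lemma snocE_castSucc (w : EuclideanSpace ℝ (Fin m)) (s : ℝ) (i : Fin m) :
    snocE w s i.castSucc = w i := by simp [snocE]

private lemma snocE_last (w : EuclideanSpace ℝ (Fin m)) (s : ℝ) :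
    snocE w s (Fin.last m) = s := by simp [snocE]

private lemma snocE_sub (w w' : EuclideanSpace ℝ (Fin m)) (s s' : ℝ) :
    snocE w s - snocE w' s' = snocE (w - w') (s - s') := by
  ext i
  induction i using Fin.lastCases with
  | last => show snocE w s (Fin.last m) - snocE w' s' (Fin.last m) = _
            rw [snocE_last, snocE_last, snocE_last]
  | cast j => show snocE w s j.castSucc - snocE w' s' j.castSucc = _
              rw [snocE_castSucc, snocE_castSucc, snocE_castSucc]; rfl

private lemma norm_sq_snocE (w : EuclideanSpace ℝ (Fin m)) (s : ℝ) :
    ‖snocE w s‖^2 = ‖w‖^2 + s^2 := by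
  rw [euc_norm_sq, euc_norm_sq, Fin.sum_univ_castSucc]
  simp [snocE_castSucc, snocE_last]

private lemma norm_snocE_le (w : EuclideanSpace ℝ (Fin m)) (s : ℝ) :
    ‖snocE w s‖ ≤ ‖w‖ + |s| := by
  apply le_of_sq_le_sq'' (norm_nonneg _) (by positivity)
  rw [norm_sq_snocE]
  nlinarith [norm_nonneg w, abs_nonneg s, sq_abs s]

private lemma snocE_projE (x : EuclideanSpace ℝ (Fin (m+1))) :
    snocE (projE x) (x (Fin.last m)) = x := by
  ext i
  induction i using Fin.lastCases with
  | last => rw [snocE_last]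
  | cast j => rw [snocE_castSucc]; rfl

private lemma projE_sub (x y : EuclideanSpace ℝ (Fin (m+1))) :
    projE x - projE y = projE (x - y) := rfl

private lemma norm_projE_le (x : EuclideanSpace ℝ (Fin (m+1))) : ‖projE x‖ ≤ ‖x‖ := by
  apply le_of_sq_le_sq'' (norm_nonneg _) (norm_nonneg _)
  have := norm_sq_snocE (projE x) (x (Fin.last m))
  rw [snocE_projE] at this
  nlinarith [sq_nonneg (x (Fin.last m))]

private lemma norm_sq_split (x : EuclideanSpace ℝ (Fin (m+1))) :
    ‖x‖^2 = ‖projE x‖^2 + (x (Fin.last m))^2 := by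
  conv_lhs => rw [← snocE_projE x]
  rw [norm_sq_snocE]

-- McShane extension wrapper
private lemma extend_from_subset {X : Type*} [MetricSpace X] (A : Set X) (lam : ℝ)
    (hlam : 0 ≤ lam) (t : A → ℝ)
    (ht : ∀ a b : A, |t a - t b| ≤ lam * dist (a : X) (b : X)) :
    ∃ u : X → ℝ, (∀ a : A, u a = t a) ∧ ∀ x y : X, |u x - u y| ≤ lam * dist x y := by
  classical
  set t' : X → ℝ := fun x => if h : x ∈ A then t ⟨x, h⟩ else 0 with ht'
  have hlip : LipschitzOnWith lam.toNNReal t' A := by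
    rw [lipschitzOnWith_iff_dist_le_mul]
    intro x hx y hy
    rw [Real.coe_toNNReal _ hlam]
    have := ht ⟨x, hx⟩ ⟨y, hy⟩
    simpa [ht', hx, hy, Real.dist_eq] using this
  obtain ⟨u, hu1, hu2⟩ := hlip.extend_real
  refine ⟨u, fun a => ?_, fun x y => ?_⟩
  · have := hu2 a.2
    simp only [ht'] at this
    rw [← this]
    simp [a.2]
  · have := hu1.dist_le_mul x y
    rw [Real.coe_toNNReal _ hlam, Real.dist_eq] at this
    exact this

end helpers


/-- A metric space `E` is a large scale Lipschitz extensor of `X`: there are `C, M > 0` such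
that every `λ`-Lipschitz map on a nonempty subset of `X` with `0 < λ < M` extends to a
`(C·λ)`-Lipschitz map on `X`. -/
def LargeScaleLipschitzExtensorOf (X E : Type*) [MetricSpace X] [MetricSpace E] : Prop :=
  ∃ C : ℝ, 0 < C ∧ ∃ M : ℝ, 0 < M ∧ ∀ A : Set X, A.Nonempty →
    ∀ lam : ℝ, 0 < lam → lam < M →
      ∀ f : A → E, (∀ a b : A, dist (f a) (f b) ≤ lam * dist (a : X) (b : X)) →
        ∃ g : X → E, (∀ a : A, g a = f a) ∧
          ∀ x y : X, dist (g x) (g y) ≤ C * lam * dist x y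

/-- A metric space `E` is a small scale Lipschitz extensor of `X`: there are `C, M > 0` such
that every `λ`-Lipschitz map on a nonempty subset of `X` with `λ > M` extends to a
`(C·λ)`-Lipschitz map on `X`. -/
def SmallScaleLipschitzExtensorOf (X E : Type*) [MetricSpace X] [MetricSpace E] : Prop :=
  ∃ C : ℝ, 0 < C ∧ ∃ M : ℝ, 0 < M ∧ ∀ A : Set X, A.Nonempty →
    ∀ lam : ℝ, M < lam →
      ∀ f : A → E, (∀ a b : A, dist (f a) (f b) ≤ lam * dist (a : X) (b : X)) →
        ∃ g : X → E, (∀ a : A, g a = f a) ∧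
          ∀ x y : X, dist (g x) (g y) ≤ C * lam * dist x y

set_option maxHeartbeats 1600000 in
theorem sphere_succ_large_scale_extensor_of_sphere
    {X : Type*} [MetricSpace X] (n : ℕ)
    (h : LargeScaleLipschitzExtensorOf X
      (Metric.sphere (0 : EuclideanSpace ℝ (Fin (n + 1))) 1)) :
    LargeScaleLipschitzExtensorOf X
      (Metric.sphere (0 : EuclideanSpace ℝ (Fin (n + 2))) 1) := by
  classical
  obtain ⟨C₀, hC₀, M₀, hM₀, hext⟩ := h
  obtain ⟨κ, hκdef⟩ : ∃ k : ℝ, k = (n : ℝ) + 2 := ⟨_, rfl⟩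
  have hκ2 : (2:ℝ) ≤ κ := by
    rw [hκdef]; have := (Nat.cast_nonneg n : (0:ℝ) ≤ n); linarith
  have hκpos : (0:ℝ) < κ := by linarith
  obtain ⟨ε₀, hε₀def⟩ : ∃ e : ℝ, e = 1 / (100 * (C₀ + 1)) := ⟨_, rfl⟩
  have hε₀pos : (0:ℝ) < ε₀ := by rw [hε₀def]; positivity
  have hε₀le : ε₀ ≤ 1 / 100 := by
    rw [hε₀def, div_le_div_iff₀ (by positivity) (by norm_num)]; nlinarith
  have hCε : C₀ * ε₀ ≤ 1 / 100 := by
    rw [hε₀def, mul_one_div, div_le_div_iff₀ (by positivity) (by norm_num)]; nlinarith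
  have hinv : κ/(2*ε₀) = 50*κ*(C₀+1) := by
    rw [hε₀def]; field_simp; ring
  refine ⟨8 * (10*κ + 40*C₀ + 50*κ*(C₀+1)), by positivity, M₀/16, by positivity, ?_⟩
  intro A hA lam hlam hlamM f hf
  -- Step 1: coordinatewise McShane extension of f
  have hFex : ∃ F : X → EuclideanSpace ℝ (Fin (n+2)),
      (∀ a : A, F (a : X) = (f a : EuclideanSpace ℝ (Fin (n+2)))) ∧
      (∀ x y : X, ‖F x - F y‖ ≤ κ * lam * dist x y) := by
    have hcoord : ∀ i : Fin (n+2), ∃ u : X → ℝ,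
        (∀ a : A, u a = (f a : EuclideanSpace ℝ (Fin (n+2))) i) ∧
        ∀ x y : X, |u x - u y| ≤ lam * dist x y := by
      intro i
      refine extend_from_subset A lam hlam.le _ ?_
      intro a b
      calc |(f a : EuclideanSpace ℝ (Fin (n+2))) i - (f b : EuclideanSpace ℝ (Fin (n+2))) i|
          = |((f a : EuclideanSpace ℝ (Fin (n+2))) - (f b : EuclideanSpace ℝ (Fin (n+2)))) i| :=
            rfl
        _ ≤ ‖(f a : EuclideanSpace ℝ (Fin (n+2))) - (f b : EuclideanSpace ℝ (Fin (n+2)))‖ :=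
            euc_coord_le _ i
        _ = dist (f a) (f b) := by rw [Subtype.dist_eq, dist_eq_norm]
        _ ≤ lam * dist (a : X) (b : X) := hf a b
    choose Fc hFc1 hFc2 using hcoord
    refine ⟨fun x => WithLp.toLp 2 (fun i => Fc i x), fun a => PiLp.ext fun i => hFc1 i a, ?_⟩
    intro x y
    apply le_of_sq_le_sq'' (norm_nonneg _) (by positivity)
    rw [euc_norm_sq]
    have hb : ∀ i : Fin (n+2), (Fc i x - Fc i y)^2 ≤ (lam * dist x y)^2 := by
      intro i
      rw [← sq_abs]
      exact pow_le_pow_left₀ (abs_nonneg _) (hFc2 i x y) 2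
    have hone : (1:ℝ) ≤ (n:ℝ) + 2 := by
      have := (Nat.cast_nonneg n : (0:ℝ) ≤ n); linarith
    calc ∑ i, (Fc i x - Fc i y)^2
        ≤ ∑ _i : Fin (n+2), (lam * dist x y)^2 := Finset.sum_le_sum (fun i _ => hb i)
      _ = ((n:ℝ)+2) * (lam * dist x y)^2 := by
          rw [Finset.sum_const, Finset.card_univ, Fintype.card_fin]; push_cast; ring
      _ ≤ (κ * lam * dist x y)^2 := by
          rw [hκdef]; nlinarith [sq_nonneg (lam * dist x y)]
  obtain ⟨F, hFA, hFLip⟩ := hFex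
  -- scale R
  obtain ⟨R, hRdef⟩ : ∃ r : ℝ, r = ε₀ / (κ * lam) := ⟨_, rfl⟩
  have hRpos : 0 < R := by rw [hRdef]; positivity
  have hkmR : κ * lam * R = ε₀ := by
    rw [hRdef]; field_simp
  have hRfact : ∀ d : ℝ, d / R = κ * lam / ε₀ * d := by
    intro d
    rw [hRdef, div_div_eq_mul_div]
    ring
  -- components
  obtain ⟨c, hc⟩ : ∃ c : X → ℝ, ∀ x, c x = max (-1) (min 1 (F x (Fin.last (n+1)))) :=
    ⟨_, fun _ => rfl⟩
  obtain ⟨F₁, hF₁⟩ : ∃ g : X → EuclideanSpace ℝ (Fin (n+1)), ∀ x, g x = projE (F x) :=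
    ⟨_, fun _ => rfl⟩
  obtain ⟨m, hm⟩ : ∃ m : X → ℝ, ∀ x, m x = max (1/2 - |c x|) (min ‖F₁ x‖ 1) :=
    ⟨_, fun _ => rfl⟩
  have hmem1 : ∀ a : A, ‖(f a : EuclideanSpace ℝ (Fin (n+2)))‖ = 1 := fun a =>
    mem_sphere_zero_iff_norm.mp (f a).2
  obtain ⟨A'', hA''⟩ : ∃ S : Set X,
      ∀ x, x ∈ S ↔ (x ∈ A ∧ |F x (Fin.last (n+1))| ≤ 99/100) := ⟨_, fun _ => Iff.rfl⟩
  -- Step 2: the equatorial map from the hypothesis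
  have hvex : ∃ v : X → EuclideanSpace ℝ (Fin (n+1)), (∀ x, ‖v x‖ = 1) ∧
      (∀ x y : X, ‖v x - v y‖ ≤ C₀ * (16 * lam) * dist x y) ∧
      (∀ x, x ∈ A'' → v x = ‖F₁ x‖⁻¹ • F₁ x) := by
    have hlow : ∀ x, x ∈ A'' → (1/8 : ℝ) ≤ ‖F₁ x‖ := by
      intro x hx
      obtain ⟨hxA, hxt⟩ := (hA'' x).mp hx
      have h1 : ‖F x‖ = 1 := by
        rw [show F x = F ((⟨x, hxA⟩ : A) : X) from rfl, hFA ⟨x, hxA⟩]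
        exact hmem1 ⟨x, hxA⟩
      have h2 := norm_sq_split (F x)
      rw [h1, one_pow] at h2
      apply le_of_sq_le_sq'' (by norm_num) (norm_nonneg _)
      rw [hF₁ x]
      nlinarith [sq_abs (F x (Fin.last (n+1))), abs_nonneg (F x (Fin.last (n+1)))]
    rcases Set.eq_empty_or_nonempty A'' with hE | hNE
    · refine ⟨fun _ => EuclideanSpace.single 0 1,
        fun x => by simp [EuclideanSpace.norm_single], fun x y => ?_, fun x hx => ?_⟩
      · rw [sub_self, norm_zero]; positivity
      · rw [hE] at hx; exact absurd hx (Set.notMem_empty x)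
    · have hpos : ∀ a : A'', (0:ℝ) < ‖F₁ (a : X)‖ :=
        fun a => lt_of_lt_of_le (by norm_num) (hlow a a.2)
      set v₀ : A'' → Metric.sphere (0 : EuclideanSpace ℝ (Fin (n+1))) 1 := fun a =>
        ⟨‖F₁ (a : X)‖⁻¹ • F₁ (a : X), by
          rw [mem_sphere_zero_iff_norm, norm_smul, Real.norm_eq_abs,
            abs_of_pos (inv_pos.mpr (hpos a))]
          exact inv_mul_cancel₀ (hpos a).ne'⟩ with hv₀def
      have hlip₀ : ∀ a b : A'', dist (v₀ a) (v₀ b) ≤ (16*lam) * dist (a:X) (b:X) := by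
        intro a b
        have h16 : 2 / ‖F₁ (a:X)‖ ≤ 16 := by
          rw [div_le_iff₀ (hpos a)]; nlinarith [hlow a a.2]
        have hFab : ‖F₁ (a:X) - F₁ (b:X)‖ ≤ lam * dist (a:X) (b:X) := by
          have ha' : F ((a:X)) = (f ⟨(a:X), ((hA'' _).mp a.2).1⟩ : EuclideanSpace ℝ (Fin (n+2))) :=
            hFA ⟨(a:X), ((hA'' _).mp a.2).1⟩
          have hb' : F ((b:X)) = (f ⟨(b:X), ((hA'' _).mp b.2).1⟩ : EuclideanSpace ℝ (Fin (n+2))) :=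
            hFA ⟨(b:X), ((hA'' _).mp b.2).1⟩
          calc ‖F₁ (a:X) - F₁ (b:X)‖ = ‖projE (F (a:X) - F (b:X))‖ := by
                rw [hF₁ (a:X), hF₁ (b:X), projE_sub]
            _ ≤ ‖F (a:X) - F (b:X)‖ := norm_projE_le _
            _ = dist (f ⟨(a:X), ((hA'' _).mp a.2).1⟩) (f ⟨(b:X), ((hA'' _).mp b.2).1⟩) := by
                rw [Subtype.dist_eq, dist_eq_norm]
                simp only [ha', hb']
            _ ≤ lam * dist (a:X) (b:X) := hf _ _
        rw [Subtype.dist_eq, dist_eq_norm]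
        calc ‖(v₀ a : EuclideanSpace ℝ (Fin (n+1))) - (v₀ b : EuclideanSpace ℝ (Fin (n+1)))‖
            = ‖‖F₁ (a:X)‖⁻¹ • F₁ (a:X) - ‖F₁ (b:X)‖⁻¹ • F₁ (b:X)‖ := rfl
          _ ≤ 2 / ‖F₁ (a:X)‖ * ‖F₁ (a:X) - F₁ (b:X)‖ :=
              normalize_sub_normalize _ _ (norm_pos_iff.mp (hpos a)) (norm_pos_iff.mp (hpos b))
          _ ≤ 16 * (lam * dist (a:X) (b:X)) := by
              apply mul_le_mul h16 hFab (norm_nonneg _) (by norm_num)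
          _ = (16*lam) * dist (a:X) (b:X) := by ring
      obtain ⟨g₀, hg₀A, hg₀L⟩ := hext A'' hNE (16*lam) (by positivity) (by linarith) v₀ hlip₀
      refine ⟨fun x => (g₀ x : EuclideanSpace ℝ (Fin (n+1))),
        fun x => mem_sphere_zero_iff_norm.mp (g₀ x).2, fun x y => ?_, fun x hx => ?_⟩
      · have h1 := hg₀L x y
        rw [Subtype.dist_eq, dist_eq_norm] at h1
        exact h1
      · have h1 := hg₀A ⟨x, hx⟩
        have h2 : (g₀ x : EuclideanSpace ℝ (Fin (n+1)))
            = (v₀ ⟨x, hx⟩ : EuclideanSpace ℝ (Fin (n+1))) := by rw [h1]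
        exact h2
  obtain ⟨v, hv1, hvL, hvA⟩ := hvex
  -- basic bounds
  have hc1 : ∀ x, |c x| ≤ 1 := by
    intro x
    rw [hc x, abs_le]
    constructor
    · exact le_max_left _ _
    · exact max_le (by norm_num) (min_le_left _ _)
  have hm0 : ∀ x, 0 ≤ m x := by
    intro x
    rw [hm x]
    exact le_trans (le_min (norm_nonneg _) (by norm_num)) (le_max_right _ _)
  have hm1 : ∀ x, m x ≤ 1 := by
    intro x
    rw [hm x]
    apply max_le
    · linarith [abs_nonneg (c x)]
    · exact min_le_right _ _
  have hmc : ∀ x, 1/2 ≤ m x + |c x| := by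
    intro x
    rw [hm x]
    have := le_max_left (1/2 - |c x|) (min ‖F₁ x‖ 1)
    linarith
  obtain ⟨θ, hθ⟩ : ∃ t : X → ℝ, ∀ x, t x = min 1 (max 0 (2 - Metric.infDist x A / R)) :=
    ⟨_, fun _ => rfl⟩
  have hθ0 : ∀ x, 0 ≤ θ x := by
    intro x; rw [hθ x]; exact le_min (by norm_num) (le_max_left 0 _)
  have hθ1 : ∀ x, θ x ≤ 1 := by
    intro x; rw [hθ x]; exact min_le_left _ _
  have hθpos : ∀ x, 0 < θ x → Metric.infDist x A < 2*R := by
    intro x hx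
    by_contra hcon
    push_neg at hcon
    have h1 : 2 - Metric.infDist x A / R ≤ 0 := by
      rw [sub_nonpos, le_div_iff₀ hRpos]; linarith
    have h2 : θ x ≤ 0 := by
      rw [hθ x]
      calc min 1 (max 0 (2 - Metric.infDist x A / R))
          ≤ max 0 (2 - Metric.infDist x A / R) := min_le_right _ _
        _ = 0 := max_eq_left h1
    linarith
  obtain ⟨G₂, hG₂⟩ : ∃ g : X → EuclideanSpace ℝ (Fin (n+2)),
      ∀ x, g x = snocE (m x • v x) (c x) := ⟨_, fun _ => rfl⟩
  obtain ⟨H, hH⟩ : ∃ h : X → EuclideanSpace ℝ (Fin (n+2)),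
      ∀ x, h x = G₂ x + θ x • (F x - G₂ x) := ⟨_, fun _ => rfl⟩
  -- KEY estimate
  have key : ∀ x : X, Metric.infDist x A < 2*R → 39/40 ≤ ‖F x‖ ∧ ‖F x - G₂ x‖ ≤ 1/2 := by
    intro x hx
    obtain ⟨a, haA, hdxa⟩ := (Metric.infDist_lt_iff hA).mp
      (lt_trans hx (by linarith : 2*R < 5/2*R))
    obtain ⟨p, hpdef⟩ : ∃ p : EuclideanSpace ℝ (Fin (n+2)), p = F a := ⟨_, rfl⟩
    have hp1 : ‖p‖ = 1 := by
      rw [hpdef, show F a = F ((⟨a, haA⟩ : A) : X) from rfl, hFA ⟨a, haA⟩]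
      exact hmem1 ⟨a, haA⟩
    have hFxa : ‖F x - p‖ ≤ 5/2 * ε₀ := by
      calc ‖F x - p‖ = ‖F x - F a‖ := by rw [hpdef]
        _ ≤ κ * lam * dist x a := hFLip x a
        _ ≤ κ * lam * (5/2 * R) := by
            apply mul_le_mul_of_nonneg_left hdxa.le (by positivity)
        _ = 5/2 * ε₀ := by rw [show κ * lam * (5/2*R) = 5/2*(κ*lam*R) by ring, hkmR]
    have hFxlow : 39/40 ≤ ‖F x‖ := by
      have h' := abs_norm_sub_norm_le (F x) p
      rw [hp1] at h'
      have := abs_le.mp h'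
      linarith [hε₀le]
    refine ⟨hFxlow, ?_⟩
    have hlast : |F x (Fin.last (n+1)) - p (Fin.last (n+1))| ≤ 5/2*ε₀ := by
      have he : F x (Fin.last (n+1)) - p (Fin.last (n+1)) = (F x - p) (Fin.last (n+1)) := rfl
      rw [he]
      exact le_trans (euc_coord_le _ _) hFxa
    have hplast1 : |p (Fin.last (n+1))| ≤ 1 := le_trans (euc_coord_le p _) (le_of_eq hp1)
    have hclast : |c x - p (Fin.last (n+1))| ≤ 5/2*ε₀ := by
      rw [hc x]
      conv_lhs => rw [← clamp_eq_self hplast1]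
      exact le_trans (clamp_lip _ _) hlast
    have hproj : ‖F₁ x - projE p‖ ≤ 5/2*ε₀ := by
      calc ‖F₁ x - projE p‖ = ‖projE (F x - p)‖ := by rw [hF₁ x, projE_sub]
        _ ≤ ‖F x - p‖ := norm_projE_le _
        _ ≤ 5/2*ε₀ := hFxa
    have hsplitp : ‖projE p‖^2 + (p (Fin.last (n+1)))^2 = 1 := by
      have h2 := norm_sq_split p
      rw [hp1, one_pow] at h2
      linarith
    have hprojle1 : ‖projE p‖ ≤ 1 := by
      nlinarith [hsplitp, norm_nonneg (projE p), sq_nonneg (p (Fin.last (n+1)))]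
    have hnorm : |‖F₁ x‖ - ‖projE p‖| ≤ 5/2*ε₀ := le_trans (abs_norm_sub_norm_le _ _) hproj
    have hmx : |m x - ‖projE p‖| ≤ 5/2*ε₀ := by
      have h12 : 1/2 - |p (Fin.last (n+1))| ≤ ‖projE p‖ := by
        rcases le_total (1/2) |p (Fin.last (n+1))| with hle | hle
        · linarith [norm_nonneg (projE p)]
        · apply le_of_sq_le_sq'' (by linarith) (norm_nonneg _)
          nlinarith [sq_abs (p (Fin.last (n+1))), abs_nonneg (p (Fin.last (n+1)))]
      have h13 : 1/2 - |c x| ≤ ‖projE p‖ + 5/2*ε₀ := by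
        have h14 := abs_sub_abs_le_abs_sub (p (Fin.last (n+1))) (c x)
        rw [abs_sub_comm] at h14
        linarith
      have hup : m x ≤ ‖projE p‖ + 5/2*ε₀ := by
        rw [hm x]
        apply max_le h13
        calc min ‖F₁ x‖ 1 ≤ ‖F₁ x‖ := min_le_left _ _
          _ ≤ ‖projE p‖ + 5/2*ε₀ := by have := abs_le.mp hnorm; linarith
      have hdown : ‖projE p‖ - 5/2*ε₀ ≤ m x := by
        rw [hm x]
        calc ‖projE p‖ - 5/2*ε₀ ≤ min ‖F₁ x‖ 1 := by
              apply le_min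
              · have := abs_le.mp hnorm; linarith
              · linarith
          _ ≤ max (1/2 - |c x|) (min ‖F₁ x‖ 1) := le_max_right _ _
      rw [abs_le]; constructor <;> linarith
    have hdecomp : F x - G₂ x
        = (F x - p) + snocE (projE p - m x • v x) (p (Fin.last (n+1)) - c x) := by
      have h1 : p - G₂ x = snocE (projE p - m x • v x) (p (Fin.last (n+1)) - c x) := by
        conv_lhs => rw [← snocE_projE p]
        rw [hG₂ x, snocE_sub]
      rw [← h1]; abel
    rw [hdecomp]
    have htri : ‖(F x - p) + snocE (projE p - m x • v x) (p (Fin.last (n+1)) - c x)‖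
        ≤ 5/2*ε₀ + (‖projE p - m x • v x‖ + |p (Fin.last (n+1)) - c x|) := by
      calc ‖(F x - p) + snocE (projE p - m x • v x) (p (Fin.last (n+1)) - c x)‖
          ≤ ‖F x - p‖ + ‖snocE (projE p - m x • v x) (p (Fin.last (n+1)) - c x)‖ :=
            norm_add_le _ _
        _ ≤ 5/2*ε₀ + (‖projE p - m x • v x‖ + |p (Fin.last (n+1)) - c x|) :=
            add_le_add hFxa (norm_snocE_le _ _)
    have hclast' : |p (Fin.last (n+1)) - c x| ≤ 5/2*ε₀ := by
      rw [abs_sub_comm]; exact hclast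
    rcases le_total |p (Fin.last (n+1))| (99/100) with hcase | hcase
    · -- equatorial case
      have haA'' : a ∈ A'' := by
        apply (hA'' a).mpr
        refine ⟨haA, ?_⟩
        rw [← hpdef]
        exact hcase
      have hva : v a = ‖projE p‖⁻¹ • projE p := by
        have h1 := hvA a haA''
        rw [hF₁ a, ← hpdef] at h1
        exact h1
      have hplow : (1/8:ℝ) ≤ ‖projE p‖ := by
        apply le_of_sq_le_sq'' (by norm_num) (norm_nonneg _)
        nlinarith [hsplitp, sq_abs (p (Fin.last (n+1))), abs_nonneg (p (Fin.last (n+1)))]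
      have hppos : (0:ℝ) < ‖projE p‖ := lt_of_lt_of_le (by norm_num) hplow
      have hrecon : ‖projE p‖ • v a = projE p := by
        rw [hva]
        exact smul_inv_smul₀ hppos.ne' _
      have hvax : ‖v a - v x‖ ≤ 1/5 := by
        calc ‖v a - v x‖ ≤ C₀ * (16*lam) * dist a x := hvL a x
          _ ≤ C₀ * (16*lam) * (5/2*R) := by
              apply mul_le_mul_of_nonneg_left _ (by positivity)
              rw [dist_comm]; exact hdxa.le
          _ = 40 * C₀ * (lam * R) := by ring
          _ = 40 * C₀ * (ε₀ / κ) := by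
              rw [show lam * R = (κ * lam * R)/κ by field_simp, hkmR]
          _ ≤ 20 * (C₀ * ε₀) := by
              rw [div_eq_mul_inv]
              have hi : κ⁻¹ ≤ 1/2 := by
                rw [inv_le_comm₀ (by linarith) (by norm_num)]; linarith
              have h20 : 40 * C₀ * (ε₀ * κ⁻¹) ≤ 40 * C₀ * (ε₀ * (1/2)) := by
                apply mul_le_mul_of_nonneg_left _ (by positivity)
                apply mul_le_mul_of_nonneg_left hi hε₀pos.le
              linarith
          _ ≤ 1/5 := by linarith
      have hfirst : ‖projE p - m x • v x‖ ≤ 5/2*ε₀ + 1/5 := by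
        have hsplit2 : projE p - m x • v x
            = (‖projE p‖ - m x) • v a + m x • (v a - v x) := by
          rw [sub_smul, smul_sub, hrecon]; abel
        rw [hsplit2]
        calc ‖(‖projE p‖ - m x) • v a + m x • (v a - v x)‖
            ≤ ‖(‖projE p‖ - m x) • v a‖ + ‖m x • (v a - v x)‖ := norm_add_le _ _
          _ = |‖projE p‖ - m x| * ‖v a‖ + |m x| * ‖v a - v x‖ := by
              rw [norm_smul, norm_smul, Real.norm_eq_abs, Real.norm_eq_abs]
          _ ≤ (5/2*ε₀) * 1 + 1 * (1/5) := by
              apply add_le_add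
              · apply mul_le_mul _ (le_of_eq (hv1 a)) (norm_nonneg _) (by positivity)
                rw [abs_sub_comm]; exact hmx
              · apply mul_le_mul _ hvax (norm_nonneg _) (by norm_num)
                rw [abs_of_nonneg (hm0 x)]; exact hm1 x
          _ = 5/2*ε₀ + 1/5 := by ring
      calc ‖(F x - p) + snocE (projE p - m x • v x) (p (Fin.last (n+1)) - c x)‖
          ≤ 5/2*ε₀ + (‖projE p - m x • v x‖ + |p (Fin.last (n+1)) - c x|) := htri
        _ ≤ 5/2*ε₀ + ((5/2*ε₀ + 1/5) + 5/2*ε₀) := by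
            exact add_le_add_right (add_le_add hfirst hclast') _
        _ ≤ 1/2 := by linarith [hε₀le]
    · -- polar case
      have hsmall : ‖projE p‖ ≤ 3/20 := by
        apply le_of_sq_le_sq'' (norm_nonneg _) (by norm_num)
        nlinarith [hsplitp, sq_abs (p (Fin.last (n+1))), abs_nonneg (p (Fin.last (n+1))),
          hplast1]
      have hfirst : ‖projE p - m x • v x‖ ≤ 3/20 + (3/20 + 5/2*ε₀) := by
        calc ‖projE p - m x • v x‖ ≤ ‖projE p‖ + ‖m x • v x‖ := norm_sub_le _ _
          _ = ‖projE p‖ + |m x| := by rw [norm_smul, Real.norm_eq_abs, hv1, mul_one]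
          _ ≤ 3/20 + (3/20 + 5/2*ε₀) := by
              have h1 := abs_le.mp hmx
              rw [abs_of_nonneg (hm0 x)]
              apply add_le_add hsmall
              linarith
      calc ‖(F x - p) + snocE (projE p - m x • v x) (p (Fin.last (n+1)) - c x)‖
          ≤ 5/2*ε₀ + (‖projE p - m x • v x‖ + |p (Fin.last (n+1)) - c x|) := htri
        _ ≤ 5/2*ε₀ + ((3/20 + (3/20 + 5/2*ε₀)) + 5/2*ε₀) := by
            exact add_le_add_right (add_le_add hfirst hclast') _
        _ ≤ 1/2 := by linarith [hε₀le]
  -- norm lower bound for H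
  have hHlow : ∀ x, 1/4 ≤ ‖H x‖ := by
    intro x
    rcases eq_or_lt_of_le (hθ0 x) with hθx | hθx
    · have hHx : H x = G₂ x := by
        rw [hH x, ← hθx, zero_smul, add_zero]
      rw [hHx]
      have hGnorm : ‖G₂ x‖^2 = (m x)^2 + (c x)^2 := by
        rw [hG₂ x, norm_sq_snocE, norm_smul, Real.norm_eq_abs, hv1, mul_one, sq_abs]
      apply le_of_sq_le_sq'' (by norm_num) (norm_nonneg _)
      rw [hGnorm]
      nlinarith [hmc x, hm0 x, abs_nonneg (c x), sq_abs (c x), sq_nonneg (m x - |c x|)]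
    · have h1 := key x (hθpos x hθx)
      have hHx : H x = F x - (1 - θ x) • (F x - G₂ x) := by
        rw [hH x, sub_smul, one_smul]; abel
      rw [hHx]
      have h2 : ‖(1 - θ x) • (F x - G₂ x)‖ ≤ 1/2 := by
        rw [norm_smul, Real.norm_eq_abs, abs_of_nonneg (by linarith [hθ1 x])]
        calc (1 - θ x) * ‖F x - G₂ x‖ ≤ 1 * (1/2) :=
            mul_le_mul (by linarith [hθ0 x]) h1.2 (norm_nonneg _) (by norm_num)
          _ = 1/2 := by norm_num
      have h3 := norm_sub_norm_le (F x) ((1 - θ x) • (F x - G₂ x))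
      linarith [h1.1]
  have hH0 : ∀ x, H x ≠ 0 := by
    intro x h0
    have := hHlow x
    rw [h0, norm_zero] at this
    linarith
  -- agreement on A
  have hHA : ∀ a : A, H (a : X) = (f a : EuclideanSpace ℝ (Fin (n+2))) := by
    intro a
    have hθa : θ (a : X) = 1 := by
      rw [hθ (a : X), Metric.infDist_zero_of_mem a.2, zero_div, sub_zero]
      norm_num
    rw [hH (a : X), hθa, one_smul,
      show G₂ (a:X) + (F (a:X) - G₂ (a:X)) = F (a:X) by abel]
    exact hFA a
  -- Lipschitz estimates
  have hcLip : ∀ x y, |c x - c y| ≤ κ * lam * dist x y := by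
    intro x y
    rw [hc x, hc y]
    calc |max (-1) (min 1 (F x (Fin.last (n+1)))) - max (-1) (min 1 (F y (Fin.last (n+1))))|
        ≤ |F x (Fin.last (n+1)) - F y (Fin.last (n+1))| := clamp_lip _ _
      _ = |(F x - F y) (Fin.last (n+1))| := rfl
      _ ≤ ‖F x - F y‖ := euc_coord_le _ _
      _ ≤ κ * lam * dist x y := hFLip x y
  have hF₁Lip : ∀ x y, ‖F₁ x - F₁ y‖ ≤ κ * lam * dist x y := by
    intro x y
    calc ‖F₁ x - F₁ y‖ = ‖projE (F x - F y)‖ := by rw [hF₁ x, hF₁ y, projE_sub]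
      _ ≤ ‖F x - F y‖ := norm_projE_le _
      _ ≤ κ * lam * dist x y := hFLip x y
  have hmLip : ∀ x y, |m x - m y| ≤ 2 * (κ * lam * dist x y) := by
    intro x y
    have h1 : |(1/2 - |c x|) - (1/2 - |c y|)| ≤ κ * lam * dist x y := by
      calc |(1/2 - |c x|) - (1/2 - |c y|)| = |(|c y|) - (|c x|)| := by
            rw [show (1/2 - |c x|) - (1/2 - |c y|) = |c y| - |c x| by ring]
        _ ≤ |c y - c x| := abs_abs_sub_abs_le_abs_sub _ _
        _ = |c x - c y| := abs_sub_comm _ _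
        _ ≤ κ * lam * dist x y := hcLip x y
    have h2 : |min ‖F₁ x‖ 1 - min ‖F₁ y‖ 1| ≤ κ * lam * dist x y := by
      rw [min_comm ‖F₁ x‖ 1, min_comm ‖F₁ y‖ 1]
      calc |min 1 ‖F₁ x‖ - min 1 ‖F₁ y‖| ≤ |‖F₁ x‖ - ‖F₁ y‖| := min_lip 1 _ _
        _ ≤ ‖F₁ x - F₁ y‖ := abs_norm_sub_norm_le _ _
        _ ≤ κ * lam * dist x y := hF₁Lip x y
    have h3 : |max (1/2 - |c x|) (min ‖F₁ x‖ 1) - max (1/2 - |c x|) (min ‖F₁ y‖ 1)|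
        ≤ κ * lam * dist x y := le_trans (max_lip _ _ _) h2
    have h4 : |max (1/2 - |c x|) (min ‖F₁ y‖ 1) - max (1/2 - |c y|) (min ‖F₁ y‖ 1)|
        ≤ κ * lam * dist x y := by
      rw [max_comm (1/2 - |c x|) (min ‖F₁ y‖ 1), max_comm (1/2 - |c y|) (min ‖F₁ y‖ 1)]
      exact le_trans (max_lip _ _ _) h1
    rw [hm x, hm y]
    have he : max (1/2 - |c x|) (min ‖F₁ x‖ 1) - max (1/2 - |c y|) (min ‖F₁ y‖ 1)
        = (max (1/2 - |c x|) (min ‖F₁ x‖ 1) - max (1/2 - |c x|) (min ‖F₁ y‖ 1))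
        + (max (1/2 - |c x|) (min ‖F₁ y‖ 1) - max (1/2 - |c y|) (min ‖F₁ y‖ 1)) := by
      ring
    rw [he]
    calc |_ + _| ≤ _ + _ := abs_add_le _ _
      _ ≤ κ * lam * dist x y + κ * lam * dist x y := add_le_add h3 h4
      _ = 2 * (κ * lam * dist x y) := by ring
  have hG₂Lip : ∀ x y, ‖G₂ x - G₂ y‖ ≤ (3*κ + 16*C₀) * lam * dist x y := by
    intro x y
    have hsp : m x • v x - m y • v y = (m x - m y) • v x + m y • (v x - v y) := by
      rw [sub_smul, smul_sub]; abel
    calc ‖G₂ x - G₂ y‖ = ‖snocE (m x • v x - m y • v y) (c x - c y)‖ := by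
          rw [hG₂ x, hG₂ y, snocE_sub]
      _ ≤ ‖m x • v x - m y • v y‖ + |c x - c y| := norm_snocE_le _ _
      _ ≤ (|m x - m y| * ‖v x‖ + |m y| * ‖v x - v y‖) + |c x - c y| := by
          apply add_le_add_left
          rw [hsp]
          calc ‖(m x - m y) • v x + m y • (v x - v y)‖
              ≤ ‖(m x - m y) • v x‖ + ‖m y • (v x - v y)‖ := norm_add_le _ _
            _ = |m x - m y| * ‖v x‖ + |m y| * ‖v x - v y‖ := by
                rw [norm_smul, norm_smul, Real.norm_eq_abs, Real.norm_eq_abs]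
      _ ≤ (2 * (κ * lam * dist x y) * 1 + 1 * (C₀ * (16*lam) * dist x y))
            + κ * lam * dist x y := by
          apply add_le_add _ (hcLip x y)
          apply add_le_add
          · exact mul_le_mul (hmLip x y) (le_of_eq (hv1 x)) (norm_nonneg _) (by positivity)
          · apply mul_le_mul _ (hvL x y) (norm_nonneg _) (by norm_num)
            rw [abs_of_nonneg (hm0 y)]; exact hm1 y
      _ = (3*κ + 16*C₀) * lam * dist x y := by ring
  have hθLip : ∀ x y, |θ x - θ y| ≤ κ * lam / ε₀ * dist x y := by
    intro x y
    have hd1 := Metric.infDist_le_infDist_add_dist (x := x) (y := y) (s := A)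
    have hd2 := Metric.infDist_le_infDist_add_dist (x := y) (y := x) (s := A)
    rw [dist_comm y x] at hd2
    have hd : |Metric.infDist x A - Metric.infDist y A| ≤ dist x y := by
      rw [abs_sub_le_iff]; constructor <;> linarith
    have he : (2 - Metric.infDist x A / R) - (2 - Metric.infDist y A / R)
        = (Metric.infDist y A - Metric.infDist x A) / R := by
      field_simp; ring
    rw [hθ x, hθ y]
    calc |min 1 (max 0 (2 - Metric.infDist x A / R))
          - min 1 (max 0 (2 - Metric.infDist y A / R))|
        ≤ |max 0 (2 - Metric.infDist x A / R) - max 0 (2 - Metric.infDist y A / R)| :=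
          min_lip 1 _ _
      _ ≤ |(2 - Metric.infDist x A / R) - (2 - Metric.infDist y A / R)| := max_lip 0 _ _
      _ = |Metric.infDist y A - Metric.infDist x A| / R := by
          rw [he, abs_div, abs_of_pos hRpos]
      _ ≤ dist x y / R := by
          rw [div_le_div_iff_of_pos_right hRpos, abs_sub_comm]; exact hd
      _ = κ * lam / ε₀ * dist x y := hRfact (dist x y)
  have hDLip : ∀ x y, ‖(F x - G₂ x) - (F y - G₂ y)‖ ≤ (4*κ + 16*C₀) * lam * dist x y := by
    intro x y
    calc ‖(F x - G₂ x) - (F y - G₂ y)‖ = ‖(F x - F y) - (G₂ x - G₂ y)‖ := by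
          rw [show (F x - G₂ x) - (F y - G₂ y) = (F x - F y) - (G₂ x - G₂ y) by abel]
      _ ≤ ‖F x - F y‖ + ‖G₂ x - G₂ y‖ := norm_sub_le _ _
      _ ≤ κ * lam * dist x y + (3*κ + 16*C₀) * lam * dist x y :=
          add_le_add (hFLip x y) (hG₂Lip x y)
      _ = (4*κ + 16*C₀) * lam * dist x y := by ring
  have hθD : ∀ x y, ‖θ x • (F x - G₂ x) - θ y • (F y - G₂ y)‖
      ≤ (κ/(2*ε₀) + 4*κ + 16*C₀) * lam * dist x y := by
    have main : ∀ x y, 0 < θ x → ‖θ x • (F x - G₂ x) - θ y • (F y - G₂ y)‖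
        ≤ (κ/(2*ε₀) + 4*κ + 16*C₀) * lam * dist x y := by
      intro x y hθx
      have hDx := (key x (hθpos x hθx)).2
      have hsp : θ x • (F x - G₂ x) - θ y • (F y - G₂ y)
          = (θ x - θ y) • (F x - G₂ x) + θ y • ((F x - G₂ x) - (F y - G₂ y)) := by
        rw [sub_smul (θ x) (θ y) (F x - G₂ x), smul_sub (θ y) (F x - G₂ x) (F y - G₂ y)]
        abel
      rw [hsp]
      calc ‖(θ x - θ y) • (F x - G₂ x) + θ y • ((F x - G₂ x) - (F y - G₂ y))‖
          ≤ ‖(θ x - θ y) • (F x - G₂ x)‖ + ‖θ y • ((F x - G₂ x) - (F y - G₂ y))‖ :=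
            norm_add_le _ _
        _ = |θ x - θ y| * ‖F x - G₂ x‖ + |θ y| * ‖(F x - G₂ x) - (F y - G₂ y)‖ := by
            rw [norm_smul, norm_smul, Real.norm_eq_abs, Real.norm_eq_abs]
        _ ≤ (κ * lam / ε₀ * dist x y) * (1/2) + 1 * ((4*κ + 16*C₀) * lam * dist x y) := by
            apply add_le_add
            · apply mul_le_mul (hθLip x y) hDx (norm_nonneg _) (by positivity)
            · apply mul_le_mul _ (hDLip x y) (norm_nonneg _) (by norm_num)
              rw [abs_of_nonneg (hθ0 y)]; exact hθ1 y
        _ = (κ/(2*ε₀) + 4*κ + 16*C₀) * lam * dist x y := by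
            field_simp [hε₀pos.ne']
            ring
    intro x y
    rcases lt_or_ge 0 (θ x) with hθx | hθx
    · exact main x y hθx
    · have hθx0 : θ x = 0 := le_antisymm hθx (hθ0 x)
      rcases lt_or_ge 0 (θ y) with hθy | hθy
      · calc ‖θ x • (F x - G₂ x) - θ y • (F y - G₂ y)‖
            = ‖θ y • (F y - G₂ y) - θ x • (F x - G₂ x)‖ := norm_sub_rev _ _
          _ ≤ (κ/(2*ε₀) + 4*κ + 16*C₀) * lam * dist y x := main y x hθy
          _ = (κ/(2*ε₀) + 4*κ + 16*C₀) * lam * dist x y := by rw [dist_comm]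
      · have hθy0 : θ y = 0 := le_antisymm hθy (hθ0 y)
        rw [hθx0, hθy0, zero_smul, zero_smul, sub_zero, norm_zero]
        positivity
  have hHLip : ∀ x y, ‖H x - H y‖ ≤ (10*κ + 40*C₀ + 50*κ*(C₀+1)) * lam * dist x y := by
    intro x y
    have hdn : 0 ≤ lam * dist x y := by positivity
    calc ‖H x - H y‖
        = ‖(G₂ x - G₂ y) + (θ x • (F x - G₂ x) - θ y • (F y - G₂ y))‖ := by
          rw [hH x, hH y]
          rw [show G₂ x + θ x • (F x - G₂ x) - (G₂ y + θ y • (F y - G₂ y))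
            = (G₂ x - G₂ y) + (θ x • (F x - G₂ x) - θ y • (F y - G₂ y)) by abel]
      _ ≤ ‖G₂ x - G₂ y‖ + ‖θ x • (F x - G₂ x) - θ y • (F y - G₂ y)‖ := norm_add_le _ _
      _ ≤ (3*κ + 16*C₀) * lam * dist x y
            + (κ/(2*ε₀) + 4*κ + 16*C₀) * lam * dist x y :=
          add_le_add (hG₂Lip x y) (hθD x y)
      _ ≤ (10*κ + 40*C₀ + 50*κ*(C₀+1)) * lam * dist x y := by
          rw [hinv]
          nlinarith [hdn, hκpos, hC₀]
  -- assemble the extension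
  refine ⟨fun x => ⟨‖H x‖⁻¹ • H x, by
    rw [mem_sphere_zero_iff_norm, norm_smul, Real.norm_eq_abs,
      abs_of_pos (inv_pos.mpr (norm_pos_iff.mpr (hH0 x)))]
    exact inv_mul_cancel₀ (norm_ne_zero_iff.mpr (hH0 x))⟩, ?_, ?_⟩
  · intro a
    apply Subtype.ext
    show ‖H (a : X)‖⁻¹ • H (a : X) = (f a : EuclideanSpace ℝ (Fin (n+2)))
    rw [hHA a, hmem1 a]
    norm_num
  · intro x y
    rw [Subtype.dist_eq, dist_eq_norm]
    show ‖‖H x‖⁻¹ • H x - ‖H y‖⁻¹ • H y‖ ≤ _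
    have h8 : 2/‖H x‖ ≤ 8 := by
      rw [div_le_iff₀ (norm_pos_iff.mpr (hH0 x))]
      linarith [hHlow x]
    calc ‖‖H x‖⁻¹ • H x - ‖H y‖⁻¹ • H y‖
        ≤ 2/‖H x‖ * ‖H x - H y‖ := normalize_sub_normalize _ _ (hH0 x) (hH0 y)
      _ ≤ 8 * ‖H x - H y‖ := mul_le_mul_of_nonneg_right h8 (norm_nonneg _)
      _ ≤ 8 * ((10*κ + 40*C₀ + 50*κ*(C₀+1)) * lam * dist x y) :=
          mul_le_mul_of_nonneg_left (hHLip x y) (by norm_num)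
      _ = 8 * (10*κ + 40*C₀ + 50*κ*(C₀+1)) * lam * dist x y := by ring
end
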